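/- For d ≥ 2 and 1 ≤ j ≤ d-1, the sum Σ C(d, d-V)·C(d-V-1+n, n), taken over pairs (V, n) with 1 ≤ V ≤ d-1, 0 ≤ n ≤ V-1 and V - n = d - j, equals C(d+j-1, j). -/
import Mathlib

theorem sum_over_ordinary_facets (d j : ℕ) (hd : 2 ≤ d) (hj1 : 1 ≤ j) (hj2 : j ≤ d - 1) :
    ∑ p ∈ (Finset.range (d + 1) ×ˢ Finset.range (d + 1)).filter
        (fun p => 1 ≤ p.1 ∧ p.1 ≤ d - 1 ∧ p.2 + 1 ≤ p.1 ∧ p.1 - p.2 = d - j),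
      Nat.choose d (d - p.1) * Nat.choose (d - p.1 - 1 + p.2) p.2 =
      Nat.choose (d + j - 1) j := by
  have key : ∑ p ∈ (Finset.range (d + 1) ×ˢ Finset.range (d + 1)).filter
        (fun p => 1 ≤ p.1 ∧ p.1 ≤ d - 1 ∧ p.2 + 1 ≤ p.1 ∧ p.1 - p.2 = d - j),
      Nat.choose d (d - p.1) * Nat.choose (d - p.1 - 1 + p.2) p.2 =
      ∑ n ∈ Finset.range j, Nat.choose d (j - n) * Nat.choose (j - 1) n := by
    apply Finset.sum_nbij' (i := fun p => p.2) (j := fun n => (n + (d - j), n))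
    · intro p hp
      simp only [Finset.mem_filter, Finset.mem_product, Finset.mem_range] at hp
      simp only [Finset.mem_range]
      omega
    · intro n hn
      simp only [Finset.mem_range] at hn
      simp only [Finset.mem_filter, Finset.mem_product, Finset.mem_range]
      omega
    · intro p hp
      simp only [Finset.mem_filter, Finset.mem_product, Finset.mem_range] at hp
      ext <;> simp; omega
    · intro n hn
      rfl
    · intro p hp
      simp only [Finset.mem_filter, Finset.mem_product, Finset.mem_range] at hp
      have h1 : d - p.1 = j - p.2 := by omega
      have h2 : d - p.1 - 1 + p.2 = j - 1 := by omega
      rw [h2, h1]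
  rw [key]
  have hrhs : d + j - 1 = d + (j - 1) := by omega
  rw [hrhs, Nat.add_choose_eq, Finset.Nat.sum_antidiagonal_eq_sum_range_succ_mk,
    Finset.sum_range_succ']
  have h0 : Nat.choose d 0 * Nat.choose (j - 1) (j - 0) = 0 := by
    have hlt : j - 1 < j - 0 := by omega
    rw [Nat.choose_eq_zero_of_lt hlt, mul_zero]
  rw [h0, add_zero, ← Finset.sum_range_reflect]
  apply Finset.sum_congr rfl
  intro n hn
  simp only [Finset.mem_range] at hn
  have e1 : j - (j - 1 - n) = n + 1 := by omega
  have e2 : j - 1 - n = j - (n + 1) := by omega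
  rw [e1, e2]
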